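/- If s ≥ 6 is even, a_k = 1/k! for 0 ≤ k ≤ s-2, a_{s-1} = 3/(s+2)! - 3/(s+1)! + 1/(s-1)!, and a_s = 3/(s+2)! - 3/(s+1)! + 1/s!, then b_k = 0 for 1 ≤ k ≤ (s+2)/2, where b_k = ∑_{i=max(0,2k-s)}^{min(2k,s)} (-1)^{k+i} a_i a_{2k-i}. -/

import Mathlib

open Finset

lemma alt_sum_real (n : ℕ) (hn : 1 ≤ n) :
    ∑ i ∈ Finset.range (n + 1),
      (-1 : ℝ) ^ i / ((Nat.factorial i : ℝ) * (Nat.factorial (n - i) : ℝ)) = 0 := by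
  have key : ∑ i ∈ Finset.range (n + 1), (-1 : ℝ) ^ i * (n.choose i : ℝ) = 0 := by
    have h := Int.alternating_sum_range_choose (n := n)
    rw [if_neg (by omega)] at h
    have h2 := congrArg (fun z : ℤ => (z : ℝ)) h
    push_cast at h2
    simpa using h2
  have hstep : ∀ i ∈ Finset.range (n + 1),
      (-1 : ℝ) ^ i / ((Nat.factorial i : ℝ) * (Nat.factorial (n - i) : ℝ))
        = (-1 : ℝ) ^ i * (n.choose i : ℝ) / (Nat.factorial n : ℝ) := by
    intro i hi
    rw [Finset.mem_range] at hi
    have hc := Nat.choose_mul_factorial_mul_factorial (Nat.lt_succ_iff.mp hi)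
    have hcR : ((n.choose i : ℝ)) * (Nat.factorial i : ℝ) * (Nat.factorial (n - i) : ℝ)
        = (Nat.factorial n : ℝ) := by exact_mod_cast congrArg (fun z : ℕ => (z : ℝ)) hc
    have h1 : (Nat.factorial i : ℝ) ≠ 0 := by positivity
    have h2 : (Nat.factorial (n - i) : ℝ) ≠ 0 := by positivity
    have h3 : (Nat.factorial n : ℝ) ≠ 0 := by positivity
    field_simp
    linear_combination (-1 : ℝ) * hcR
  rw [Finset.sum_congr rfl hstep, ← Finset.sum_div, key, zero_div]

theorem bk_vanish_even_stage (s : ℕ) (hs : 6 ≤ s) (hse : Even s)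
    (a : ℕ → ℝ)
    (ha : ∀ k ≤ s - 2, a k = 1 / (Nat.factorial k : ℝ))
    (has1 : a (s - 1) = 3 / (Nat.factorial (s + 2) : ℝ) - 3 / (Nat.factorial (s + 1) : ℝ)
      + 1 / (Nat.factorial (s - 1) : ℝ))
    (has : a s = 3 / (Nat.factorial (s + 2) : ℝ) - 3 / (Nat.factorial (s + 1) : ℝ)
      + 1 / (Nat.factorial s : ℝ))
    (k : ℕ) (hk1 : 1 ≤ k) (hk2 : k ≤ (s + 2) / 2) :
    ∑ i ∈ Finset.Icc (max 0 (2 * k - s)) (min (2 * k) s),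
        (-1 : ℝ) ^ (k + i) * a i * a (2 * k - i) = 0 := by
  obtain ⟨m, hm⟩ := hse
  rcases (show 2 * k ≤ s - 2 ∨ 2 * k = s ∨ 2 * k = s + 2 by omega) with hc | hc | hc
  · -- Case 1 : 2k ≤ s - 2, all coefficients are pure 1/i!
    rw [show max 0 (2 * k - s) = 0 by omega, show min (2 * k) s = 2 * k by omega,
      show Finset.Icc 0 (2 * k) = Finset.range (2 * k + 1) by ext x; simp]
    have hstep : ∀ i ∈ Finset.range (2 * k + 1),
        (-1 : ℝ) ^ (k + i) * a i * a (2 * k - i)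
          = (-1 : ℝ) ^ k *
            ((-1 : ℝ) ^ i / ((Nat.factorial i : ℝ) * (Nat.factorial (2 * k - i) : ℝ))) := by
      intro i hi
      rw [Finset.mem_range] at hi
      rw [ha i (by omega), ha (2 * k - i) (by omega), pow_add]
      ring
    rw [Finset.sum_congr rfl hstep, ← Finset.mul_sum, alt_sum_real (2 * k) (by omega), mul_zero]
  · -- Case 2 : 2k = s
    rw [show max 0 (2 * k - s) = 0 by omega, show min (2 * k) s = s by omega]
    have hdec : Finset.Icc 0 s
        = insert 0 (insert 1 (insert (s-1) (insert s (Finset.Icc 2 (s-2))))) := by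
      ext x; simp; omega
    have hsplit : ∀ f : ℕ → ℝ, ∑ i ∈ Finset.Icc 0 s, f i
        = f 0 + f 1 + f (s-1) + f s + ∑ i ∈ Finset.Icc 2 (s-2), f i := by
      intro f
      rw [hdec, Finset.sum_insert (by simp only [Finset.mem_insert, Finset.mem_Icc]; omega),
        Finset.sum_insert (by simp only [Finset.mem_insert, Finset.mem_Icc]; omega),
        Finset.sum_insert (by simp only [Finset.mem_insert, Finset.mem_Icc]; omega),
        Finset.sum_insert (by simp only [Finset.mem_Icc]; omega)]
      ring
    set P : ℕ → ℝ :=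
      fun i => (-1 : ℝ) ^ (k + i) / ((Nat.factorial i : ℝ) * (Nat.factorial (s - i) : ℝ))
      with hPdef
    have hP : ∑ i ∈ Finset.Icc 0 s, P i = 0 := by
      rw [show Finset.Icc 0 s = Finset.range (s+1) by ext x; simp]
      have hst : ∀ i ∈ Finset.range (s+1),
          P i = (-1:ℝ)^k * ((-1:ℝ)^i / ((Nat.factorial i : ℝ) * (Nat.factorial (s-i) : ℝ))) := by
        intro i _
        simp only [hPdef, pow_add]
        ring
      rw [Finset.sum_congr rfl hst, ← Finset.mul_sum, alt_sum_real s (by omega), mul_zero]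
    have hmid : ∑ i ∈ Finset.Icc 2 (s-2), ((-1:ℝ)^(k+i) * a i * a (2*k - i))
        = ∑ i ∈ Finset.Icc 2 (s-2), P i := by
      refine Finset.sum_congr rfl fun i hi => ?_
      rw [Finset.mem_Icc] at hi
      rw [ha i (by omega), ha (2*k - i) (by omega), show 2*k - i = s - i by omega]
      simp only [hPdef]
      ring
    have h1 := hsplit (fun i => (-1:ℝ)^(k+i) * a i * a (2*k - i))
    have h2 := hsplit P
    rw [h1, hmid]
    have hmid2 : ∑ i ∈ Finset.Icc 2 (s-2), P i = -(P 0 + P 1 + P (s-1) + P s) := by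
      linarith [hP, h2]
    rw [hmid2]
    have hodd : Odd (s - 1) := Nat.Even.sub_odd (by omega) ⟨m, hm⟩ odd_one
    have heven : Even s := ⟨m, hm⟩
    simp only [hPdef, show 2*k - 0 = s by omega, show 2*k - 1 = s - 1 by omega,
      show 2*k - (s-1) = 1 by omega, show 2*k - s = 0 by omega,
      show s - 0 = s by omega, show s - (s-1) = 1 by omega, show s - s = 0 by omega,
      ha 0 (by omega), ha 1 (by omega), has1, has,
      Nat.factorial_zero, Nat.factorial_one, Nat.cast_one,
      pow_add, Even.neg_one_pow heven, Odd.neg_one_pow hodd]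
    ring
  · -- Case 3 : 2k = s + 2
    rw [show max 0 (2 * k - s) = 2 by omega, show min (2 * k) s = s by omega]
    have hdec : Finset.Icc 0 (s+2)
        = insert 0 (insert 1 (insert (s+1) (insert (s+2) (Finset.Icc 2 s)))) := by
      ext x; simp; omega
    have hsplit : ∀ f : ℕ → ℝ, ∑ i ∈ Finset.Icc 0 (s+2), f i
        = f 0 + f 1 + f (s+1) + f (s+2) + ∑ i ∈ Finset.Icc 2 s, f i := by
      intro f
      rw [hdec, Finset.sum_insert (by simp only [Finset.mem_insert, Finset.mem_Icc]; omega),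
        Finset.sum_insert (by simp only [Finset.mem_insert, Finset.mem_Icc]; omega),
        Finset.sum_insert (by simp only [Finset.mem_insert, Finset.mem_Icc]; omega),
        Finset.sum_insert (by simp only [Finset.mem_Icc]; omega)]
      ring
    have hdecb : Finset.Icc 2 s
        = insert 2 (insert 3 (insert (s-1) (insert s (Finset.Icc 4 (s-2))))) := by
      ext x; simp; omega
    have hsplitb : ∀ f : ℕ → ℝ, ∑ i ∈ Finset.Icc 2 s, f i
        = f 2 + f 3 + f (s-1) + f s + ∑ i ∈ Finset.Icc 4 (s-2), f i := by
      intro f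
      rw [hdecb, Finset.sum_insert (by simp only [Finset.mem_insert, Finset.mem_Icc]; omega),
        Finset.sum_insert (by simp only [Finset.mem_insert, Finset.mem_Icc]; omega),
        Finset.sum_insert (by simp only [Finset.mem_insert, Finset.mem_Icc]; omega),
        Finset.sum_insert (by simp only [Finset.mem_Icc]; omega)]
      ring
    set Q : ℕ → ℝ :=
      fun i => (-1 : ℝ) ^ (k + i) / ((Nat.factorial i : ℝ) * (Nat.factorial (s + 2 - i) : ℝ))
      with hQdef
    have hQ : ∑ i ∈ Finset.Icc 0 (s+2), Q i = 0 := by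
      rw [show Finset.Icc 0 (s+2) = Finset.range (s+2+1) by ext x; simp]
      have hst : ∀ i ∈ Finset.range (s+2+1),
          Q i = (-1:ℝ)^k * ((-1:ℝ)^i / ((Nat.factorial i : ℝ) * (Nat.factorial (s+2-i) : ℝ))) := by
        intro i _
        simp only [hQdef, pow_add]
        ring
      rw [Finset.sum_congr rfl hst, ← Finset.mul_sum, alt_sum_real (s+2) (by omega), mul_zero]
    have hmid : ∑ i ∈ Finset.Icc 4 (s-2), ((-1:ℝ)^(k+i) * a i * a (2*k - i))
        = ∑ i ∈ Finset.Icc 4 (s-2), Q i := by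
      refine Finset.sum_congr rfl fun i hi => ?_
      rw [Finset.mem_Icc] at hi
      rw [ha i (by omega), ha (2*k - i) (by omega), show 2*k - i = s + 2 - i by omega]
      simp only [hQdef]
      ring
    have h1 := hsplitb (fun i => (-1:ℝ)^(k+i) * a i * a (2*k - i))
    have h2 := hsplitb Q
    have h3 := hsplit Q
    rw [h1, hmid]
    have hmid2 : ∑ i ∈ Finset.Icc 4 (s-2), Q i
        = -(Q 0 + Q 1 + Q (s+1) + Q (s+2)) - (Q 2 + Q 3 + Q (s-1) + Q s) := by
      linarith [hQ, h2, h3]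
    rw [hmid2]
    have hodd : Odd (s - 1) := Nat.Even.sub_odd (by omega) ⟨m, hm⟩ odd_one
    have hodd1 : Odd (s + 1) := Even.add_one ⟨m, hm⟩
    have heven : Even s := ⟨m, hm⟩
    have heven2 : Even (s + 2) := ⟨m+1, by omega⟩
    simp only [hQdef, show 2*k - 2 = s by omega, show 2*k - 3 = s - 1 by omega,
      show 2*k - (s-1) = 3 by omega, show 2*k - s = 2 by omega,
      show s + 2 - 0 = s + 2 by omega, show s + 2 - 1 = s + 1 by omega,
      show s + 2 - (s+1) = 1 by omega, show s + 2 - (s+2) = 0 by omega,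
      show s + 2 - 2 = s by omega, show s + 2 - 3 = s - 1 by omega,
      show s + 2 - (s-1) = 3 by omega, show s + 2 - s = 2 by omega,
      ha 2 (by omega), ha 3 (by omega), has1, has,
      Nat.factorial_zero, Nat.factorial_one, Nat.cast_one,
      show ((Nat.factorial 2 : ℕ) : ℝ) = 2 by norm_num [Nat.factorial],
      show ((Nat.factorial 3 : ℕ) : ℝ) = 6 by norm_num [Nat.factorial],
      pow_add, Even.neg_one_pow heven, Even.neg_one_pow heven2,
      Odd.neg_one_pow hodd, Odd.neg_one_pow hodd1]
    ring
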